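/- Let n ∈ ℕ and let T : ℂ_n[z] → ℂ[z] be a linear operator, extended to polynomials in two variables z,w by T(z^k w^ℓ) = T(z^k) w^ℓ. Then T maps every stable polynomial of degree at most n to a stable polynomial or to 0 if and only if either (a) T has range of dimension at most one and is of the form T(f) = α(f)P for all f ∈ ℂ_n[z], where α : ℂ_n[z] → ℂ is a linear functional and P is a stable polynomial, or (b) the bivariate polynomial T[(z+w)^n] is stable. -/

import Mathlib

open Polynomial

noncomputable section

/-- A univariate complex polynomial is stable if it does not vanish on the open upper
half-plane. -/
def UStable (f : Polynomial ℂ) : Prop := ∀ z : ℂ, 0 < z.im → f.eval z ≠ 0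

/-- A real univariate polynomial is hyperbolic if it is nonzero and all its (complex)
zeros are real. -/
def Hyperbolic (p : Polynomial ℝ) : Prop :=
  p ≠ 0 ∧ ∀ z : ℂ, Polynomial.aeval z p = 0 → z.im = 0

/-- Merge two lists alternately: `mergeAlt [a1,a2,...] [b1,b2,...] = [a1,b1,a2,b2,...]`. -/
def mergeAlt : List ℝ → List ℝ → List ℝ
  | [], l => l
  | a :: as, l => a :: mergeAlt l as
termination_by a b => a.length + b.length
decreasing_by simp [List.length]; omega

/-- `AltSeq α β` : the alternation α₁ ≤ β₁ ≤ α₂ ≤ β₂ ≤ ⋯ holds (lengths differ by at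
most one, starting with α). -/
def AltSeq (α β : List ℝ) : Prop :=
  (α.length = β.length ∨ α.length = β.length + 1) ∧
    List.Chain' (· ≤ ·) (mergeAlt α β)

/-- The zeros of two real polynomials interlace. -/
def ZerosInterlace (P Q : Polynomial ℝ) : Prop :=
  (P.degree ≤ 1 ∧ Q.degree ≤ 1) ∨
    ∃ α β : List ℝ, P.roots = ↑α ∧ Q.roots = ↑β ∧ (AltSeq α β ∨ AltSeq β α)

/-- Evaluation of a bivariate polynomial `F ∈ ℂ[z][w]` at `(z, w)`. -/
def evalBiv (F : Polynomial (Polynomial ℂ)) (z w : ℂ) : ℂ :=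
  (F.map (Polynomial.evalRingHom z)).eval w

/-- A bivariate polynomial is stable if it does not vanish when both coordinates are in
the open upper half-plane. -/
def BStable (F : Polynomial (Polynomial ℂ)) : Prop :=
  ∀ z w : ℂ, 0 < z.im → 0 < w.im → evalBiv F z w ≠ 0

/-- The canonical map `ℝ[z][w] → ℂ[z][w]`. -/
def bivToC (F : Polynomial (Polynomial ℝ)) : Polynomial (Polynomial ℂ) :=
  F.map (Polynomial.mapRingHom (algebraMap ℝ ℂ))

/-- A real bivariate polynomial is (real) stable if its complexification is stable. -/
def RStableBiv (F : Polynomial (Polynomial ℝ)) : Prop := BStable (bivToC F)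

/-- The extension of a linear operator `T` on `ℂ[z]` to `ℂ[z][w]` determined by
`T(z^k w^ℓ) = T(z^k) w^ℓ`. -/
def extT (T : Polynomial ℂ →ₗ[ℂ] Polynomial ℂ) (F : Polynomial (Polynomial ℂ)) :
    Polynomial (Polynomial ℂ) :=
  F.sum fun k c => Polynomial.C (T c) * Polynomial.X ^ k

/-- The extension of a linear operator `T` on `ℝ[z]` to `ℝ[z][w]` determined by
`T(z^k w^ℓ) = T(z^k) w^ℓ`. -/
def extTR (T : Polynomial ℝ →ₗ[ℝ] Polynomial ℝ) (F : Polynomial (Polynomial ℝ)) :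
    Polynomial (Polynomial ℝ) :=
  F.sum fun k c => Polynomial.C (T c) * Polynomial.X ^ k






def Complex.abs : AbsoluteValue ℂ ℝ where
  toFun z := ‖z‖
  map_mul' := norm_mul
  nonneg' := norm_nonneg
  eq_zero' _ := norm_eq_zero
  add_le' := norm_add_le

lemma Complex.abs_apply (z : ℂ) : Complex.abs z = Real.sqrt (Complex.normSq z) := Complex.norm_def z

lemma Complex.sq_abs (z : ℂ) : Complex.abs z ^ 2 = Complex.normSq z := Complex.sq_norm z

lemma Complex.abs_ofReal (r : ℝ) : Complex.abs (r : ℂ) = |r| := by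
  show ‖(r : ℂ)‖ = |r|
  simp

lemma Complex.abs_im_le_abs (z : ℂ) : |z.im| ≤ Complex.abs z := Complex.abs_im_le_norm z

lemma Complex.continuous_abs : Continuous Complex.abs := continuous_norm

lemma ustable_ne_zero {p : Polynomial ℂ} (h : UStable p) : p ≠ 0 := by
  intro h0
  exact h Complex.I (by simp) (by simp [h0])
-- Basics

lemma ustable_C {c : ℂ} (hc : c ≠ 0) : UStable (C c) := fun z _ => by simp [hc]

lemma ustable_smul_iff {c : ℂ} (hc : c ≠ 0) {p : Polynomial ℂ} :
    UStable (c • p) ↔ UStable p := by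
  unfold UStable
  constructor <;> intro h z hz <;> have := h z hz <;> simp [smul_eq_C_mul] at this ⊢ <;> tauto

lemma ustable_root_im {p : Polynomial ℂ} (h : UStable p) {r : ℂ} (hr : r ∈ p.roots) :
    r.im ≤ 0 := by
  by_contra hlt
  push_neg at hlt
  exact h r hlt ((mem_roots (ustable_ne_zero h)).mp hr)

lemma ustable_X_add_C_pow {a : ℂ} (ha : 0 ≤ a.im) (m : ℕ) : UStable ((X + C a) ^ m) := by
  intro z hz
  simp only [eval_pow, eval_add, eval_X, eval_C]
  apply pow_ne_zero
  intro h0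
  have : z = -a := by linear_combination h0
  rw [this] at hz
  simp only [Complex.neg_im] at hz
  linarith

lemma degree_X_add_C_pow_le {a : ℂ} (m : ℕ) : ((X + C a) ^ m).degree ≤ (m : WithBot ℕ) := by
  calc ((X + C a) ^ m).degree ≤ m • (X + C a).degree := degree_pow_le _ m
  _ ≤ (m : WithBot ℕ) := by
      rw [degree_X_add_C a]
      simp




/-- coefficientwise application of a functional -/
def capp (Λ : Polynomial ℂ →ₗ[ℂ] ℂ) (F : Polynomial (Polynomial ℂ)) : Polynomial ℂ :=
  F.sum fun k c => Polynomial.C (Λ c) * Polynomial.X ^ k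

lemma coeff_extT (T : Polynomial ℂ →ₗ[ℂ] Polynomial ℂ) (F : Polynomial (Polynomial ℂ)) (k : ℕ) :
    (extT T F).coeff k = T (F.coeff k) := by
  unfold extT
  rw [Polynomial.sum_def, finset_sum_coeff]
  simp only [coeff_C_mul, coeff_X_pow, mul_ite, mul_one, mul_zero]
  rw [Finset.sum_eq_single k]
  · by_cases h : k ∈ F.support
    · simp
    · simp only [if_pos rfl]
      rw [Polynomial.notMem_support_iff.mp h]
      simp
  · intro b _ hb; simp [Ne.symm hb]
  · intro h; rw [Polynomial.notMem_support_iff.mp h]; simp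

lemma coeff_capp (Λ : Polynomial ℂ →ₗ[ℂ] ℂ) (F : Polynomial (Polynomial ℂ)) (k : ℕ) :
    (capp Λ F).coeff k = Λ (F.coeff k) := by
  unfold capp
  rw [Polynomial.sum_def, finset_sum_coeff]
  simp only [coeff_C_mul, coeff_X_pow, mul_ite, mul_one, mul_zero]
  rw [Finset.sum_eq_single k]
  · by_cases h : k ∈ F.support
    · simp
    · simp only [if_pos rfl]
      rw [Polynomial.notMem_support_iff.mp h]
      simp
  · intro b _ hb; simp [Ne.symm hb]
  · intro h; rw [Polynomial.notMem_support_iff.mp h]; simp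

lemma natDegree_capp_le (Λ : Polynomial ℂ →ₗ[ℂ] ℂ) (F : Polynomial (Polynomial ℂ)) :
    (capp Λ F).natDegree ≤ F.natDegree := by
  apply natDegree_le_iff_coeff_eq_zero.mpr
  intro k hk
  rw [coeff_capp, Polynomial.coeff_eq_zero_of_natDegree_lt hk, map_zero]

lemma derivative_capp (Λ : Polynomial ℂ →ₗ[ℂ] ℂ) (F : Polynomial (Polynomial ℂ)) :
    derivative (capp Λ F) = capp Λ (derivative F) := by
  ext k
  rw [coeff_derivative, coeff_capp, coeff_capp, coeff_derivative]
  have : (F.coeff (k+1)) * ((k : Polynomial ℂ)+1) = ((k:ℂ)+1) • F.coeff (k+1) := by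
    rw [smul_eq_C_mul, map_add, map_one, Polynomial.C_eq_natCast, mul_comm]
  rw [this, map_smul, smul_eq_mul, mul_comm]

lemma eval_capp (Λ : Polynomial ℂ →ₗ[ℂ] ℂ) (F : Polynomial (Polynomial ℂ)) (w : ℂ) :
    (capp Λ F).eval w = Λ (F.eval (Polynomial.C w)) := by
  have h1 : (capp Λ F).natDegree < F.natDegree + 1 :=
    Nat.lt_succ_of_le (natDegree_capp_le Λ F)
  have h2 : F.natDegree < F.natDegree + 1 := Nat.lt_succ_self _
  rw [Polynomial.eval_eq_sum_range' h1 w, Polynomial.eval_eq_sum_range' h2 (Polynomial.C w),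
    map_sum]
  apply Finset.sum_congr rfl
  intro k _
  rw [coeff_capp]
  have : F.coeff k * (Polynomial.C w)^k = (w^k) • (F.coeff k) := by
    rw [smul_eq_C_mul, C_pow, mul_comm]
  rw [this, map_smul, smul_eq_mul, mul_comm]

lemma map_evalRingHom_extT (T : Polynomial ℂ →ₗ[ℂ] Polynomial ℂ) (F : Polynomial (Polynomial ℂ))
    (z : ℂ) :
    (extT T F).map (Polynomial.evalRingHom z) = capp ((Polynomial.leval z).comp T) F := by
  ext k
  rw [coeff_map, coeff_extT, coeff_capp]
  rfl

lemma evalBiv_extT (T : Polynomial ℂ →ₗ[ℂ] Polynomial ℂ) (F : Polynomial (Polynomial ℂ))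
    (z w : ℂ) :
    evalBiv (extT T F) z w = (T (F.eval (Polynomial.C w))).eval z := by
  rw [evalBiv, map_evalRingHom_extT, eval_capp]
  rfl

lemma eval_C_pow (m : ℕ) (w : ℂ) :
    ((Polynomial.C Polynomial.X + Polynomial.X : Polynomial (Polynomial ℂ)) ^ m).eval
      (Polynomial.C w) = (Polynomial.X + Polynomial.C w) ^ m := by
  simp




/-- C1 : reciprocal of upper half plane point lies in a disk -/
lemma inv_mem_disk {ζ : ℂ} {y : ℝ} (hy : 0 < y) (h : y ≤ ζ.im) :
    Complex.abs (ζ⁻¹ + Complex.I / (2 * y)) ≤ 1 / (2 * y) := by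
  have hζ : ζ ≠ 0 := by
    intro h0; rw [h0] at h; simp at h; linarith
  have hy' : (y:ℂ) ≠ 0 := by exact_mod_cast hy.ne'
  have habs : 0 < Complex.abs ζ := Complex.abs.pos hζ
  have key : ζ⁻¹ + Complex.I / (2 * y) = (2 * y + Complex.I * ζ) / (2 * y * ζ) := by
    field_simp
    try ring
    try tauto
  have habs2 : Complex.abs (2 * (y:ℂ) + Complex.I * ζ) ≤ Complex.abs ζ := by
    rw [Complex.abs_apply, Complex.abs_apply]
    apply Real.sqrt_le_sqrt
    simp only [Complex.normSq_apply, Complex.add_re, Complex.add_im, Complex.mul_re,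
      Complex.mul_im, Complex.I_re, Complex.I_im, Complex.ofReal_re, Complex.ofReal_im,
      Complex.re_ofNat, Complex.im_ofNat]
    nlinarith [h, hy]
  have hmod : Complex.abs (2 * (y:ℂ) * ζ) = 2 * y * Complex.abs ζ := by
    rw [map_mul, map_mul]
    have h2abs : Complex.abs 2 = 2 := by
      show ‖(2:ℂ)‖ = 2
      simp
    norm_num [Complex.abs_ofReal, abs_of_pos hy, h2abs]
  rw [key, map_div₀, hmod, div_le_div_iff₀ (by positivity) (by positivity), one_mul]
  calc Complex.abs (2 * (y:ℂ) + Complex.I * ζ) * (2 * y)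
      ≤ Complex.abs ζ * (2 * y) := by
        apply mul_le_mul_of_nonneg_right habs2 (by positivity)
    _ = 2 * y * Complex.abs ζ := by ring


lemma ustable_of_factor {g g₁ : Polynomial ℂ} {r : ℂ} (hg : UStable g)
    (heq : g = (X - C r) * g₁) : UStable g₁ := by
  intro z hz hz0
  apply hg z hz
  rw [heq, eval_mul, hz0, mul_zero]

lemma root_im_le {g : Polynomial ℂ} (hg : UStable g) {r : ℂ} (hr : g.IsRoot r) : r.im ≤ 0 := by
  by_contra hlt
  push_neg at hlt
  exact hg r hlt hr

/-- C2 : the logarithmic derivative of a stable polynomial at an upper half plane point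
lies in a disk -/
lemma logderiv_disk : ∀ (m : ℕ) (g : Polynomial ℂ), UStable g → g.natDegree = m →
    ∀ w₀ : ℂ, 0 < w₀.im →
    Complex.abs ((derivative g).eval w₀ / g.eval w₀ + Complex.I * m / (2 * w₀.im))
      ≤ m / (2 * w₀.im) := by
  intro m
  induction m with
  | zero =>
    intro g hg hdeg w₀ hw
    obtain ⟨c, rfl⟩ := Polynomial.natDegree_eq_zero.mp hdeg
    simp
  | succ m ih =>
    intro g hg hdeg w₀ hw
    have hgne : g ≠ 0 := ustable_ne_zero hg
    have hdegpos : 0 < g.degree := by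
      rw [Polynomial.degree_eq_natDegree hgne, hdeg]
      exact_mod_cast Nat.succ_pos m
    obtain ⟨r, hr⟩ := Complex.exists_root hdegpos
    obtain ⟨g₁, heq⟩ := Polynomial.dvd_iff_isRoot.mpr hr
    have hg₁ : UStable g₁ := ustable_of_factor hg heq
    have hg₁ne : g₁ ≠ 0 := fun h0 => hgne (by rw [heq, h0, mul_zero])
    have hdeg₁ : g₁.natDegree = m := by
      have := Polynomial.natDegree_mul (X_sub_C_ne_zero r) hg₁ne
      rw [← heq, hdeg, natDegree_X_sub_C] at this
      omega
    have hrim : r.im ≤ 0 := root_im_le hg hr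
    have hζim : w₀.im ≤ (w₀ - r).im := by
      simp only [Complex.sub_im]
      linarith
    have hζne : w₀ - r ≠ 0 := by
      intro h0
      have : (w₀ - r).im = 0 := by rw [h0]; simp
      simp only [Complex.sub_im] at this
      linarith
    have hg₁w : g₁.eval w₀ ≠ 0 := hg₁ w₀ hw
    have hgw : g.eval w₀ ≠ 0 := hg w₀ hw
    have hder : derivative g = g₁ + (X - C r) * derivative g₁ := by
      rw [heq, derivative_mul, derivative_X_sub_C, one_mul]
    have hu : (derivative g).eval w₀ / g.eval w₀
        = (w₀ - r)⁻¹ + (derivative g₁).eval w₀ / g₁.eval w₀ := by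
      rw [hder, heq]
      simp only [eval_add, eval_mul, eval_sub, eval_X, eval_C]
      field_simp
    have hsplit : (derivative g).eval w₀ / g.eval w₀
          + Complex.I * (m+1 : ℕ) / (2 * w₀.im)
        = ((w₀ - r)⁻¹ + Complex.I / (2 * w₀.im))
          + ((derivative g₁).eval w₀ / g₁.eval w₀ + Complex.I * m / (2 * w₀.im)) := by
      rw [hu]
      push_cast
      ring
    rw [hsplit]
    have h1 := inv_mem_disk hw hζim
    have h2 := ih g₁ hg₁ hdeg₁ w₀ hw
    calc Complex.abs _ ≤ _ := Complex.abs.add_le _ _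
      _ ≤ 1 / (2 * w₀.im) + m / (2 * w₀.im) := add_le_add h1 h2
      _ = (m+1 : ℕ) / (2 * w₀.im) := by push_cast; ring

/-- C3 : Laguerre's theorem on polar derivatives, evaluated form. -/
lemma laguerre {N : ℕ} {g : Polynomial ℂ} {a w₀ : ℂ} (hN : 1 ≤ N) (hdeg : g.natDegree ≤ N)
    (hg : UStable g) (ha : 0 < a.im) (hw : 0 < w₀.im) :
    (N:ℂ) * g.eval w₀ + (a - w₀) * (derivative g).eval w₀ ≠ 0 := by
  intro h0
  have hgw : g.eval w₀ ≠ 0 := hg w₀ hw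
  set u := (derivative g).eval w₀ / g.eval w₀ with hu
  set d := g.natDegree with hd
  set y := w₀.im with hy
  have hkey : (N:ℂ) + (a - w₀) * u = 0 := by
    have : ((N:ℂ) + (a - w₀) * u) * g.eval w₀ = 0 := by
      rw [hu]
      field_simp
      linear_combination h0
    rcases mul_eq_zero.mp this with h | h
    · exact h
    · exact absurd h hgw
  have hyne : y ≠ 0 := hw.ne'
  have hdisk := logderiv_disk d g hg rfl w₀ hw
  by_cases hu0 : u = 0
  · rw [hu0, mul_zero, add_zero] at hkey
    have : (N:ℕ) = 0 := by exact_mod_cast hkey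
    omega
  -- u ≠ 0
  set c := (d:ℝ) / (2*y) with hc
  have hrw : (derivative g).eval w₀ / g.eval w₀ + Complex.I * (d:ℂ) / (2 * (w₀.im:ℂ))
      = u + Complex.I * (c:ℂ) := by
    rw [hu, hc, ← hy]
    push_cast
    field_simp
    try ring
  rw [hrw] at hdisk
  have hcnn : 0 ≤ c := by positivity
  have hsq : Complex.normSq (u + Complex.I * (c:ℂ)) ≤ c^2 := by
    rw [← Complex.sq_abs, sq, sq]
    calc Complex.abs (u + Complex.I * (c:ℂ)) * Complex.abs (u + Complex.I * (c:ℂ))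
        ≤ ((d:ℝ) / (2*w₀.im)) * ((d:ℝ)/(2*w₀.im)) :=
          mul_self_le_mul_self (Complex.abs.nonneg _) hdisk
      _ = c * c := by rw [hc, hy]
  have hexp : Complex.normSq (u + Complex.I * (c:ℂ))
      = Complex.normSq u + 2*c*u.im + c^2 := by
    simp only [Complex.normSq_apply, Complex.add_re, Complex.add_im, Complex.mul_re,
      Complex.mul_im, Complex.I_re, Complex.I_im, Complex.ofReal_re, Complex.ofReal_im]
    ring
  have hc2 : 2 * y * c = d := by
    rw [hc]
    field_simp
  have h2' : Complex.normSq u + 2*c*u.im ≤ 0 := by nlinarith [hsq, hexp]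
  have h3 : y * Complex.normSq u + d * u.im ≤ 0 := by
    have h6 : y * (2*c*u.im) = (d:ℝ) * u.im := by rw [← hc2]; ring
    have h7 := mul_le_mul_of_nonneg_left h2' hw.le
    nlinarith [h6, h7]
  have hnupos : 0 < Complex.normSq u := Complex.normSq_pos.mpr hu0
  have hd1 : 1 ≤ d := by
    rcases Nat.eq_zero_or_pos d with h | h
    · exfalso
      rw [h] at h3
      push_cast at h3
      nlinarith
    · exact h
  have hdpos : (0:ℝ) < d := by exact_mod_cast hd1
  have hiu : y / d ≤ (u⁻¹).im := by
    rw [Complex.inv_im, div_le_div_iff₀ hdpos hnupos]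
    nlinarith [h3]
  have hceq : w₀ - a = (N:ℂ) * u⁻¹ := by
    field_simp
    linear_combination -hkey
  have him : w₀.im - a.im = (N:ℝ) * (u⁻¹).im := by
    have := congrArg Complex.im hceq
    simpa [Complex.sub_im, Complex.mul_im] using this
  set q := (u⁻¹).im with hq
  have hqpos : 0 < q := lt_of_lt_of_le (by positivity) hiu
  have h4 : y ≤ (d:ℝ) * q := by
    rw [div_le_iff₀ hdpos] at hiu
    linarith [hiu]
  have hNd : (d:ℝ) ≤ (N:ℝ) := by exact_mod_cast hdeg
  have h5 : (d:ℝ) * q ≤ (N:ℝ) * q := mul_le_mul_of_nonneg_right hNd hqpos.le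
  rw [hy] at *
  linarith [ha, him, h4, h5]

lemma capp_C_mul (Λ : Polynomial ℂ →ₗ[ℂ] ℂ) (z : ℂ) (F : Polynomial (Polynomial ℂ)) :
    capp Λ (Polynomial.C (Polynomial.C z) * F) = Polynomial.C z * capp Λ F := by
  ext k
  rw [coeff_capp, coeff_C_mul, coeff_C_mul, coeff_capp, ← smul_eq_C_mul, map_smul,
    smul_eq_mul]

lemma natDegree_CXX_pow (m : ℕ) :
    ((Polynomial.C Polynomial.X + Polynomial.X : Polynomial (Polynomial ℂ)) ^ m).natDegree ≤ m := by
  calc ((Polynomial.C Polynomial.X + Polynomial.X : Polynomial (Polynomial ℂ)) ^ m).natDegree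
      ≤ m * (Polynomial.C Polynomial.X + Polynomial.X : Polynomial (Polynomial ℂ)).natDegree :=
        natDegree_pow_le
    _ ≤ m := by
        rw [add_comm, natDegree_X_add_C]
        omega

/-- Grace's theorem, functional form. -/
lemma grace : ∀ (n : ℕ) (Λ : Polynomial ℂ →ₗ[ℂ] ℂ),
    (∀ w : ℂ, 0 < w.im → Λ ((X + C w) ^ n) ≠ 0) →
    ∀ s : Multiset ℂ, Multiset.card s = n → (∀ a ∈ s, 0 < a.im) →
    Λ ((s.map fun a => X + C a).prod) ≠ 0 := by
  intro n
  induction n with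
  | zero =>
    intro Λ hsym s hcard _
    rw [Multiset.card_eq_zero] at hcard
    subst hcard
    simpa using hsym Complex.I (by simp)
  | succ m ih =>
    intro Λ hsym s hcard him
    have hs0 : s ≠ 0 := by
      intro h0; rw [h0] at hcard; simp at hcard
    obtain ⟨a, ha⟩ := Multiset.exists_mem_of_ne_zero hs0
    obtain ⟨s', rfl⟩ := Multiset.exists_cons_of_mem ha
    have haim : 0 < a.im := him a (Multiset.mem_cons_self a s')
    set Λ' : Polynomial ℂ →ₗ[ℂ] ℂ := Λ.comp (LinearMap.mulLeft ℂ (X + C a)) with hΛ'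
    have hΛ'app : ∀ p, Λ' p = Λ ((X + C a) * p) := fun p => rfl
    set g := capp Λ ((Polynomial.C Polynomial.X + Polynomial.X) ^ (m+1)) with hg
    set g₀ := capp Λ ((Polynomial.C Polynomial.X + Polynomial.X) ^ m) with hg0
    have hgeval : ∀ w : ℂ, g.eval w = Λ ((X + C w) ^ (m+1)) := by
      intro w; rw [hg, eval_capp, eval_C_pow]
    have hg0eval : ∀ w : ℂ, g₀.eval w = Λ ((X + C w) ^ m) := by
      intro w; rw [hg0, eval_capp, eval_C_pow]
    have hgust : UStable g := by
      intro w hw; rw [hgeval]; exact hsym w hw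
    have hder : derivative g = Polynomial.C ((m:ℂ)+1) * g₀ := by
      rw [hg, derivative_capp]
      have h1 : derivative ((Polynomial.C Polynomial.X + Polynomial.X :
          Polynomial (Polynomial ℂ)) ^ (m+1))
          = Polynomial.C (Polynomial.C ((m:ℂ)+1)) *
            (Polynomial.C Polynomial.X + Polynomial.X) ^ m := by
        have h2 : derivative (Polynomial.C Polynomial.X + Polynomial.X :
            Polynomial (Polynomial ℂ)) = 1 := by
          rw [derivative_add, derivative_C, derivative_X, zero_add]
        have h3 : ((m+1:ℕ) : Polynomial ℂ) = Polynomial.C ((m:ℂ)+1) := by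
          rw [← Polynomial.C_eq_natCast]
          congr 1
          push_cast
          ring
        rw [derivative_pow, h2, mul_one, Nat.add_sub_cancel, h3]
      rw [h1, capp_C_mul]
    have hdegg : g.natDegree ≤ m + 1 := (natDegree_capp_le _ _).trans (natDegree_CXX_pow (m+1))
    have hsym' : ∀ w : ℂ, 0 < w.im → Λ' ((X + C w) ^ m) ≠ 0 := by
      intro w hw h0
      have hlag := laguerre (N := m+1) (g := g) (a := a) (w₀ := w)
        (by omega) hdegg hgust haim hw
      apply hlag
      have e1 : (X + C a) * (X + C w) ^ m
          = (X + C w) ^ (m+1) + Polynomial.C (a - w) * (X + C w) ^ m := by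
        rw [C_sub]; ring
      have e2 : Λ ((X + C a) * (X + C w) ^ m)
          = g.eval w * 0 + Λ ((X + C w) ^ (m+1)) + (a - w) * Λ ((X + C w) ^ m) := by
        rw [e1, map_add, ← smul_eq_C_mul, map_smul, smul_eq_mul]
        ring
      have e3 : Λ ((X + C a) * (X + C w) ^ m) = 0 := by rw [← hΛ'app]; exact h0
      rw [e2] at e3
      rw [hder]
      rw [eval_mul, eval_C, hgeval, hg0eval]
      push_cast
      linear_combination ((m:ℂ)+1) * e3
    have hih := ih Λ' hsym' s' (by simpa using hcard)
      (fun b hb => him b (Multiset.mem_cons_of_mem hb))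
    intro h0
    apply hih
    rw [hΛ'app]
    rw [Multiset.map_cons, Multiset.prod_cons] at h0
    exact h0

lemma abs_prod_bound : ∀ (s : Multiset ℂ) (z z₀ : ℂ) (K : ℝ), 1 ≤ K →
    (∀ r ∈ s, Complex.abs (z - r) ≤ K * Complex.abs (z₀ - r)) →
    Complex.abs ((s.map fun r => z - r).prod)
      ≤ K ^ (Multiset.card s) * Complex.abs ((s.map fun r => z₀ - r).prod) := by
  intro s
  induction s using Multiset.induction_on with
  | empty => intro z z₀ K hK _; simp
  | cons a s ih =>
    intro z z₀ K hK h
    rw [Multiset.map_cons, Multiset.prod_cons, Multiset.map_cons, Multiset.prod_cons,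
      map_mul, map_mul, Multiset.card_cons]
    have h1 : Complex.abs (z - a) ≤ K * Complex.abs (z₀ - a) :=
      h a (Multiset.mem_cons_self a s)
    have h2 := ih z z₀ K hK (fun r hr => h r (Multiset.mem_cons_of_mem hr))
    calc Complex.abs (z - a) * Complex.abs ((s.map fun r => z - r).prod)
        ≤ (K * Complex.abs (z₀ - a)) *
          (K ^ (Multiset.card s) * Complex.abs ((s.map fun r => z₀ - r).prod)) := by
          apply mul_le_mul h1 h2 (Complex.abs.nonneg _) (by positivity)
      _ = K ^ (Multiset.card s + 1) *
          (Complex.abs (z₀ - a) * Complex.abs ((s.map fun r => z₀ - r).prod)) := by ring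

lemma eval_abs_bound (q : Polynomial ℂ) (z z₀ : ℂ) (K : ℝ) (hK : 1 ≤ K) (D : ℕ)
    (hD : q.natDegree ≤ D)
    (h : ∀ r ∈ q.roots, Complex.abs (z - r) ≤ K * Complex.abs (z₀ - r)) :
    Complex.abs (q.eval z) ≤ K ^ D * Complex.abs (q.eval z₀) := by
  by_cases hq : q = 0
  · simp [hq]
  have hfac := (IsAlgClosed.splits q).eq_prod_roots
  have heval : ∀ x : ℂ, q.eval x = q.leadingCoeff * ((q.roots.map fun r => x - r).prod) := by
    intro x
    conv_lhs => rw [hfac]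
    rw [eval_mul, eval_C, eval_multiset_prod, Multiset.map_map]
    congr 1
    apply congrArg Multiset.prod
    apply Multiset.map_congr rfl
    intro r _
    simp
  have hcard : Multiset.card q.roots = q.natDegree :=
    (Polynomial.splits_iff_card_roots).mp (IsAlgClosed.splits q)
  have hb := abs_prod_bound q.roots z z₀ K hK h
  have hpow : K ^ (Multiset.card q.roots) ≤ K ^ D := by
    apply pow_le_pow_right₀ hK
    omega
  rw [heval z, heval z₀, map_mul, map_mul]
  calc Complex.abs q.leadingCoeff * Complex.abs ((q.roots.map fun r => z - r).prod)
      ≤ Complex.abs q.leadingCoeff *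
        (K ^ (Multiset.card q.roots) * Complex.abs ((q.roots.map fun r => z₀ - r).prod)) :=
        mul_le_mul_of_nonneg_left hb (Complex.abs.nonneg _)
    _ ≤ Complex.abs q.leadingCoeff *
        (K ^ D * Complex.abs ((q.roots.map fun r => z₀ - r).prod)) := by
        apply mul_le_mul_of_nonneg_left _ (Complex.abs.nonneg _)
        apply mul_le_mul_of_nonneg_right hpow (Complex.abs.nonneg _)
    _ = K ^ D * (Complex.abs q.leadingCoeff * Complex.abs ((q.roots.map fun r => z₀ - r).prod)) := by
        ring

lemma evalBiv_eq_eval_eval (Q : Polynomial (Polynomial ℂ)) (z w : ℂ) :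
    (Q.eval (Polynomial.C w)).eval z = evalBiv Q z w := by
  unfold evalBiv
  induction Q using Polynomial.induction_on' with
  | add p q hp hq => simp [hp, hq]
  | monomial k c => simp [eval_monomial, map_monomial]

lemma natDegree_eval_C_le (Q : Polynomial (Polynomial ℂ)) (w : ℂ) (D : ℕ)
    (hD : ∀ k, (Q.coeff k).natDegree ≤ D) :
    (Q.eval (Polynomial.C w)).natDegree ≤ D := by
  rw [Polynomial.eval_eq_sum, Polynomial.sum_def]
  apply Polynomial.natDegree_sum_le_of_forall_le
  intro k _
  calc ((Q.coeff k) * (Polynomial.C w) ^ k).natDegree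
      ≤ (Q.coeff k).natDegree + ((Polynomial.C w : Polynomial ℂ) ^ k).natDegree :=
        natDegree_mul_le
    _ ≤ D := by
        have : ((Polynomial.C w : Polynomial ℂ) ^ k).natDegree = 0 := by
          rw [← Polynomial.C_pow, natDegree_C]
        rw [this]
        simpa using hD k

lemma hurwitz (Q : Polynomial (Polynomial ℂ))
    (h : ∀ t : ℝ, 0 < t → UStable (Q.eval (Polynomial.C (t:ℂ)))) :
    UStable (Q.eval (Polynomial.C (0:ℂ))) ∨ Q.eval (Polynomial.C (0:ℂ)) = 0 := by
  by_cases h0 : Q.eval (Polynomial.C (0:ℂ)) = 0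
  · right; exact h0
  left
  intro z₀ hz₀ hev
  apply h0
  set p₀ := Q.eval (Polynomial.C (0:ℂ)) with hp₀
  set y := z₀.im with hy
  set D := Q.support.sup fun k => (Q.coeff k).natDegree with hDdef
  have hDk : ∀ k, (Q.coeff k).natDegree ≤ D := by
    intro k
    by_cases hk : k ∈ Q.support
    · exact Finset.le_sup (f := fun k => (Q.coeff k).natDegree) hk
    · rw [Polynomial.notMem_support_iff.mp hk, Polynomial.natDegree_zero]
      exact Nat.zero_le _
  have hball : ∀ z : ℂ, Complex.abs (z - z₀) ≤ y/2 → p₀.eval z = 0 := by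
    intro z hz
    have hineq : ∀ t : ℝ, 0 < t →
        Complex.abs (evalBiv Q z (t:ℂ)) ≤ (3/2:ℝ)^D * Complex.abs (evalBiv Q z₀ (t:ℂ)) := by
      intro t ht
      set q := Q.eval (Polynomial.C (t:ℂ)) with hqdef
      have hq : UStable q := h t ht
      have hroots : ∀ r ∈ q.roots, Complex.abs (z - r) ≤ (3/2) * Complex.abs (z₀ - r) := by
        intro r hr
        have hrim : r.im ≤ 0 := ustable_root_im hq hr
        have h1 : y ≤ Complex.abs (z₀ - r) := by
          have h2 : (z₀ - r).im ≤ |(z₀ - r).im| := le_abs_self _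
          have h3 : |(z₀ - r).im| ≤ Complex.abs (z₀ - r) := Complex.abs_im_le_abs _
          simp only [Complex.sub_im] at h2 h3
          rw [hy]
          linarith
        have h4 : Complex.abs (z - r) ≤ Complex.abs (z - z₀) + Complex.abs (z₀ - r) := by
          have : z - r = (z - z₀) + (z₀ - r) := by ring
          rw [this]
          exact Complex.abs.add_le _ _
        linarith
      have hbd := eval_abs_bound q z z₀ (3/2) (by norm_num) D
        (natDegree_eval_C_le Q _ D hDk) hroots
      rw [hqdef] at hbd
      rw [evalBiv_eq_eval_eval, evalBiv_eq_eval_eval] at hbd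
      exact hbd
    have hcont : ∀ zz : ℂ, Continuous fun t : ℝ => Complex.abs (evalBiv Q zz (t:ℂ)) := by
      intro zz
      unfold evalBiv
      exact Complex.continuous_abs.comp
        ((Polynomial.continuous _).comp Complex.continuous_ofReal)
    have hlim : Filter.Tendsto
        (fun t : ℝ => (3/2:ℝ)^D * Complex.abs (evalBiv Q z₀ (t:ℂ))
          - Complex.abs (evalBiv Q z (t:ℂ)))
        (nhdsWithin 0 (Set.Ioi 0))
        (nhds ((3/2:ℝ)^D * Complex.abs (evalBiv Q z₀ ((0:ℝ):ℂ))
          - Complex.abs (evalBiv Q z ((0:ℝ):ℂ)))) := by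
      apply Filter.Tendsto.mono_left _ nhdsWithin_le_nhds
      exact ((continuous_const.mul (hcont z₀)).sub (hcont z)).tendsto 0
    have hge : (0:ℝ) ≤ (3/2:ℝ)^D * Complex.abs (evalBiv Q z₀ ((0:ℝ):ℂ))
        - Complex.abs (evalBiv Q z ((0:ℝ):ℂ)) := by
      apply ge_of_tendsto hlim
      apply eventually_nhdsWithin_of_forall
      intro t ht
      have := hineq t ht
      linarith
    have e₀ : evalBiv Q z₀ ((0:ℝ):ℂ) = p₀.eval z₀ := by
      rw [← evalBiv_eq_eval_eval, hp₀]
      norm_num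
    have e₁ : evalBiv Q z ((0:ℝ):ℂ) = p₀.eval z := by
      rw [← evalBiv_eq_eval_eval, hp₀]
      norm_num
    rw [e₀, e₁, hev] at hge
    simp only [map_zero, mul_zero, zero_sub] at hge
    have : Complex.abs (p₀.eval z) = 0 := le_antisymm (by linarith) (Complex.abs.nonneg _)
    exact (map_eq_zero Complex.abs).mp this
  have hypos : 0 < y := hz₀
  apply Polynomial.eq_zero_of_infinite_isRoot
  apply Set.infinite_of_injective_forall_mem
    (f := fun m : ℕ => z₀ + (((y/2)/(m+1) : ℝ) : ℂ))
  · intro m m' hmm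
    simp only [add_right_inj, Complex.ofReal_inj] at hmm
    have hy2 : (y/2) ≠ 0 := by positivity
    have h8 : ((m:ℝ)+1)⁻¹ = ((m':ℝ)+1)⁻¹ :=
      mul_left_cancel₀ hy2 (by simpa [div_eq_mul_inv] using hmm)
    have h9 : ((m:ℝ)+1) = ((m':ℝ)+1) := inv_injective h8
    exact_mod_cast (by linarith : (m:ℝ) = (m':ℝ))
  · intro m
    show p₀.IsRoot _
    apply hball
    have hm1 : (0:ℝ) < (m:ℝ) + 1 := by positivity
    have : Complex.abs ((((y/2)/(m+1) : ℝ) : ℂ)) = (y/2)/((m:ℝ)+1) := by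
      rw [Complex.abs_ofReal, abs_of_nonneg (by positivity)]
    simp only [add_sub_cancel_left]
    rw [this]
    calc (y/2)/((m:ℝ)+1) ≤ (y/2)/1 := by
          apply div_le_div_of_nonneg_left (by linarith) (by norm_num) (by linarith)
      _ = y/2 := by norm_num

lemma natDegree_extT_le (T : Polynomial ℂ →ₗ[ℂ] Polynomial ℂ) (F : Polynomial (Polynomial ℂ)) :
    (extT T F).natDegree ≤ F.natDegree := by
  apply natDegree_le_iff_coeff_eq_zero.mpr
  intro k hk
  rw [coeff_extT, Polynomial.coeff_eq_zero_of_natDegree_lt hk, map_zero]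

lemma eval_C_extT (T : Polynomial ℂ →ₗ[ℂ] Polynomial ℂ) (F : Polynomial (Polynomial ℂ)) (w : ℂ) :
    (extT T F).eval (Polynomial.C w) = T (F.eval (Polynomial.C w)) := by
  have h1 : (extT T F).natDegree < F.natDegree + 1 :=
    Nat.lt_succ_of_le (natDegree_extT_le T F)
  have h2 : F.natDegree < F.natDegree + 1 := Nat.lt_succ_self _
  rw [Polynomial.eval_eq_sum_range' h1 (Polynomial.C w),
    Polynomial.eval_eq_sum_range' h2 (Polynomial.C w), map_sum]
  apply Finset.sum_congr rfl
  intro k _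
  rw [coeff_extT]
  have e1 : F.coeff k * (Polynomial.C w)^k = (w^k) • (F.coeff k) := by
    rw [smul_eq_C_mul, C_pow, mul_comm]
  have e2 : T (F.coeff k) * (Polynomial.C w)^k = (w^k) • (T (F.coeff k)) := by
    rw [smul_eq_C_mul, C_pow, mul_comm]
  rw [e1, e2, map_smul]

/-- Backward direction, case (b). -/
lemma bwd_b (n : ℕ) (T : Polynomial ℂ →ₗ[ℂ] Polynomial ℂ)
    (Hb : BStable (extT T ((Polynomial.C Polynomial.X + Polynomial.X) ^ n))) :
    ∀ f : Polynomial ℂ, f.degree ≤ (n : WithBot ℕ) → UStable f →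
      UStable (T f) ∨ T f = 0 := by
  intro f hdeg hf
  have hfne : f ≠ 0 := ustable_ne_zero hf
  set d := f.natDegree with hd
  have hdn : d ≤ n := natDegree_le_iff_degree_le.mpr hdeg
  set c := f.leadingCoeff with hc
  have hcne : c ≠ 0 := leadingCoeff_ne_zero.mpr hfne
  have hcard_roots : Multiset.card f.roots = d :=
    (Polynomial.splits_iff_card_roots).mp (IsAlgClosed.splits f)
  set A : Polynomial (Polynomial ℂ) :=
    (f.roots.map (fun r => Polynomial.C (Polynomial.X - Polynomial.C r)
      + Polynomial.C (Polynomial.C Complex.I) * Polynomial.X)).prod with hA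
  set B : Polynomial (Polynomial ℂ) :=
    (Polynomial.C Polynomial.X + Polynomial.C (Polynomial.C Complex.I)) * Polynomial.X + 1
    with hB
  set Hbig : Polynomial (Polynomial ℂ) :=
    Polynomial.C (Polynomial.C c) * A * B ^ (n - d) with hHbig
  -- symbol hypothesis for grace
  have hsymb : ∀ z₀ : ℂ, 0 < z₀.im → ∀ w : ℂ, 0 < w.im →
      ((Polynomial.leval z₀).comp T) ((X + C w) ^ n) ≠ 0 := by
    intro z₀ hz₀ w hw
    have h1 := Hb z₀ w hz₀ hw
    rw [evalBiv_extT, eval_C_pow] at h1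
    exact h1
  -- stability of the deformed polynomials
  have hTt : ∀ t : ℝ, 0 < t → UStable (T (Hbig.eval (Polynomial.C (t:ℂ)))) := by
    intro t ht
    have htne : (t:ℂ) ≠ 0 := by exact_mod_cast ht.ne'
    set s : Multiset ℂ := f.roots.map (fun r => -r + Complex.I * t)
      + Multiset.replicate (n - d) ((t:ℂ)⁻¹ + Complex.I) with hs
    have hcard : Multiset.card s = n := by
      rw [hs, Multiset.card_add, Multiset.card_map, hcard_roots, Multiset.card_replicate]
      omega
    have him : ∀ a ∈ s, 0 < a.im := by
      intro a ha
      rw [hs, Multiset.mem_add] at ha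
      rcases ha with ha | ha
      · obtain ⟨r, hr, rfl⟩ := Multiset.mem_map.mp ha
        have : r.im ≤ 0 := ustable_root_im hf hr
        simp only [Complex.add_im, Complex.neg_im, Complex.mul_im, Complex.I_re,
          Complex.I_im, Complex.ofReal_re, Complex.ofReal_im]
        nlinarith
      · rw [Multiset.eq_of_mem_replicate ha]
        have : ((t:ℂ)⁻¹).im = 0 := by
          rw [← Complex.ofReal_inv]
          exact Complex.ofReal_im _
        simp [this]
    -- factorization of the evaluated family
    have hfactor : Hbig.eval (Polynomial.C (t:ℂ))
        = Polynomial.C (c * (t:ℂ)^(n-d)) * ((s.map fun a => X + C a).prod) := by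
      rw [hHbig, eval_mul, eval_mul, eval_C, eval_pow]
      have hAeval : A.eval (Polynomial.C (t:ℂ))
          = ((f.roots.map (fun r => -r + Complex.I * t)).map (fun a => X + C a)).prod := by
        rw [hA, eval_multiset_prod, Multiset.map_map, Multiset.map_map]
        apply congrArg Multiset.prod
        apply Multiset.map_congr rfl
        intro r _
        simp only [Function.comp_apply, eval_add, eval_mul, eval_C, eval_X]
        rw [C_add, C_neg, C_mul]
        ring
      have hBeval : B.eval (Polynomial.C (t:ℂ))
          = Polynomial.C (t:ℂ) * (X + C ((t:ℂ)⁻¹ + Complex.I)) := by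
        rw [hB]
        simp only [eval_add, eval_mul, eval_C, eval_X, eval_one]
        rw [C_add, mul_add, mul_add, ← C_mul, mul_inv_cancel₀ htne, C_1]
        ring
      rw [hAeval, hBeval, hs, Multiset.map_add, Multiset.prod_add, mul_pow,
        Multiset.map_replicate, Multiset.prod_replicate, ← C_pow, C_mul]
      ring
    intro z₀ hz₀
    have hgr := grace n ((Polynomial.leval z₀).comp T) (hsymb z₀ hz₀) s hcard him
    rw [hfactor]
    have hsm : Polynomial.C (c * (t:ℂ)^(n-d)) * ((s.map fun a => X + C a).prod)
        = (c * (t:ℂ)^(n-d)) • ((s.map fun a => X + C a).prod) := by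
      rw [smul_eq_C_mul]
    rw [hsm, map_smul]
    simp only [eval_smul, smul_eq_mul]
    exact mul_ne_zero (mul_ne_zero hcne (pow_ne_zero _ htne)) hgr
  -- Hurwitz limit
  have hH0 : Hbig.eval (Polynomial.C (0:ℂ)) = f := by
    rw [hHbig, eval_mul, eval_mul, eval_C, eval_pow]
    have hAeval : A.eval (Polynomial.C (0:ℂ))
        = (f.roots.map (fun a => X - C a)).prod := by
      rw [hA, eval_multiset_prod, Multiset.map_map]
      apply congrArg Multiset.prod
      apply Multiset.map_congr rfl
      intro r _
      simp
    have hBeval : B.eval (Polynomial.C (0:ℂ)) = 1 := by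
      rw [hB]
      simp
    rw [hAeval, hBeval, one_pow, mul_one]
    exact (IsAlgClosed.splits f).eq_prod_roots.symm
  have hur := hurwitz (extT T Hbig) (by
    intro t ht
    rw [eval_C_extT]
    exact hTt t ht)
  rw [eval_C_extT, hH0] at hur
  exact hur

/-- Stability of the perturbed test polynomial in the degenerate case. -/
lemma test_stable (n k j : ℕ) (w₀ : ℂ) (hw : 0 < w₀.im) (hj : 1 ≤ j) (hjk : j ≤ k)
    (hkn : k ≤ n) (c dd : ℂ)
    (hcb : Complex.abs c < (min w₀.im 1)^j/2) (hdb : Complex.abs dd < (min w₀.im 1)^k/2) :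
    UStable ((X + C w₀)^n + C c * (X + C w₀)^(n-j) + C dd * (X + C w₀)^(n-k)) := by
  set ρ := min w₀.im 1 with hρ
  have hρpos : 0 < ρ := lt_min hw one_pos
  intro z hz h0
  set x := z + w₀ with hx
  have hxim : w₀.im < x.im := by
    rw [hx]
    simp only [Complex.add_im]
    linarith
  have hxabs : ρ < Complex.abs x := by
    have h1 : x.im ≤ |x.im| := le_abs_self _
    have h2 : |x.im| ≤ Complex.abs x := Complex.abs_im_le_abs _
    have h3 : ρ ≤ w₀.im := min_le_left _ _
    linarith
  have hxne : x ≠ 0 := by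
    intro h1
    rw [h1] at hxabs
    simp at hxabs
    linarith
  simp only [eval_add, eval_mul, eval_pow, eval_C, eval_X] at h0
  rw [← hx] at h0
  have e1 : (n-k) + k = n := by omega
  have e2 : (n-k) + (k-j) = n - j := by omega
  have e3 : x^(n-k) * (x^k + c*x^(k-j) + dd)
      = x^((n-k)+k) + c * x^((n-k)+(k-j)) + dd * x^(n-k) := by ring
  have h1 : x^(n-k) * (x^k + c*x^(k-j) + dd) = 0 := by
    rw [e3, e1, e2]
    linear_combination h0
  have h2 : x^k + c*x^(k-j) + dd = 0 :=
    (mul_eq_zero.mp h1).resolve_left (pow_ne_zero _ hxne)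
  -- norm contradiction
  have h3 : x^k = -(c*x^(k-j) + dd) := by linear_combination h2
  have h4 : Complex.abs x ^ k ≤ Complex.abs c * Complex.abs x ^ (k-j) + Complex.abs dd := by
    calc Complex.abs x ^ k = Complex.abs (x^k) := by rw [map_pow]
      _ = Complex.abs (c*x^(k-j) + dd) := by rw [h3, AbsoluteValue.map_neg]
      _ ≤ Complex.abs (c*x^(k-j)) + Complex.abs dd := Complex.abs.add_le _ _
      _ = Complex.abs c * Complex.abs x ^ (k-j) + Complex.abs dd := by
          rw [map_mul, map_pow]
  have h5 : ρ^j ≤ Complex.abs x ^ j := pow_le_pow_left₀ hρpos.le hxabs.le j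
  have h6 : ρ^k ≤ Complex.abs x ^ k := pow_le_pow_left₀ hρpos.le hxabs.le k
  have h7 : Complex.abs x ^ j * Complex.abs x ^ (k-j) = Complex.abs x ^ k := by
    rw [← pow_add]
    congr 1
    omega
  have h8 : (0:ℝ) ≤ Complex.abs x ^ (k-j) := by positivity
  nlinarith [h4, h5, h6, h7, h8, mul_le_mul_of_nonneg_right h5 h8,
    mul_le_mul_of_nonneg_right (le_of_lt hcb) h8]

/-- Forward direction. -/
lemma fwd (n : ℕ) (T : Polynomial ℂ →ₗ[ℂ] Polynomial ℂ)
    (H : ∀ f : Polynomial ℂ, f.degree ≤ (n : WithBot ℕ) → UStable f →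
      (UStable (T f) ∨ T f = 0)) :
    ((∃ (α : Polynomial ℂ →ₗ[ℂ] ℂ) (P : Polynomial ℂ), UStable P ∧
        ∀ f : Polynomial ℂ, f.degree ≤ (n : WithBot ℕ) → T f = α f • P) ∨
      BStable (extT T ((Polynomial.C Polynomial.X + Polynomial.X) ^ n))) := by
  by_cases hnd : ∀ w : ℂ, 0 < w.im → T ((X + C w)^n) ≠ 0
  · right
    intro z w hz hw
    rw [evalBiv_extT, eval_C_pow]
    rcases H ((X + C w)^n) (degree_X_add_C_pow_le n) (ustable_X_add_C_pow hw.le n) with h | h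
    · exact h z hz
    · exact absurd h (hnd w hw)
  · left
    push_neg at hnd
    obtain ⟨w₀, hw₀, hTw₀⟩ := hnd
    set v : ℕ → Polynomial ℂ := fun j => T ((X + C w₀)^(n-j)) with hv
    have hv0 : v 0 = 0 := by
      rw [hv]
      simpa using hTw₀
    set ρ := min w₀.im 1 with hρ
    have hρpos : 0 < ρ := lt_min hw₀ one_pos
    have hkey : ∀ j k : ℕ, 1 ≤ j → j ≤ k → k ≤ n → ∀ c dd : ℂ,
        Complex.abs c < ρ^j/2 → Complex.abs dd < ρ^k/2 →
        UStable (c • v j + dd • v k) ∨ c • v j + dd • v k = 0 := by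
      intro j k hj hjk hkn c dd hcb hdb
      set Q : Polynomial ℂ := (X + C w₀)^n + C c * (X + C w₀)^(n-j) + C dd * (X + C w₀)^(n-k)
        with hQ
      have hQdeg : Q.degree ≤ (n : WithBot ℕ) := by
        rw [hQ]
        apply (degree_add_le _ _).trans
        apply max_le
        · apply (degree_add_le _ _).trans
          apply max_le (degree_X_add_C_pow_le n)
          apply (degree_mul_le _ _).trans
          calc (C c).degree + ((X + C w₀)^(n-j)).degree ≤ 0 + ((n-j : ℕ) : WithBot ℕ) :=
                add_le_add degree_C_le (degree_X_add_C_pow_le _)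
            _ ≤ (n : WithBot ℕ) := by
                rw [zero_add]
                exact_mod_cast WithBot.coe_le_coe.mpr (by omega)
        · apply (degree_mul_le _ _).trans
          calc (C dd).degree + ((X + C w₀)^(n-k)).degree ≤ 0 + ((n-k : ℕ) : WithBot ℕ) :=
                add_le_add degree_C_le (degree_X_add_C_pow_le _)
            _ ≤ (n : WithBot ℕ) := by
                rw [zero_add]
                exact_mod_cast WithBot.coe_le_coe.mpr (by omega)
      have hQst : UStable Q := test_stable n k j w₀ hw₀ hj hjk hkn c dd hcb hdb
      have hTQ : T Q = c • v j + dd • v k := by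
        rw [hQ, map_add, map_add, hTw₀, ← smul_eq_C_mul, ← smul_eq_C_mul, map_smul, map_smul,
          zero_add, hv]
      rcases H Q hQdeg hQst with h | h
      · left; rw [← hTQ]; exact h
      · right; rw [← hTQ]; exact h
    -- individual stability
    have hsingle : ∀ k : ℕ, 1 ≤ k → k ≤ n → UStable (v k) ∨ v k = 0 := by
      intro k hk hkn
      have hd : Complex.abs ((((ρ^k/4 : ℝ)) : ℂ)) < ρ^k/2 := by
        rw [Complex.abs_ofReal, abs_of_nonneg (by positivity)]
        have : (0:ℝ) < ρ^k := by positivity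
        linarith
      have h0 : Complex.abs (0:ℂ) < ρ^k/2 := by
        rw [map_zero]
        positivity
      have hres := hkey k k hk le_rfl hkn 0 (((ρ^k/4 : ℝ)) : ℂ) h0 hd
      rw [zero_smul, zero_add] at hres
      have hdne : ((((ρ^k/4 : ℝ)) : ℂ)) ≠ 0 := by
        simp only [ne_eq, Complex.ofReal_eq_zero]
        positivity
      rcases hres with h | h
      · left; exact (ustable_smul_iff hdne).mp h
      · right
        rcases smul_eq_zero.mp h with h' | h'
        · exact absurd h' hdne
        · exact h'
    -- pencil lemma
    have hpencil : ∀ j k : ℕ, 1 ≤ j → j ≤ k → k ≤ n → ∀ sc : ℂ,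
        UStable (v j + sc • v k) ∨ v j + sc • v k = 0 := by
      intro j k hj hjk hkn sc
      set εr : ℝ := min (ρ^j/4) (ρ^k/(4*(Complex.abs sc+1))) with hεr
      have hscpos : (0:ℝ) < Complex.abs sc + 1 := by positivity
      have hεpos : 0 < εr := by
        apply lt_min (by positivity)
        positivity
      have hc1 : Complex.abs ((εr : ℂ)) < ρ^j/2 := by
        rw [Complex.abs_ofReal, abs_of_pos hεpos]
        calc εr ≤ ρ^j/4 := min_le_left _ _
          _ < ρ^j/2 := by
              have : (0:ℝ) < ρ^j := by positivity
              linarith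
      have hc2 : Complex.abs ((εr:ℂ) * sc) < ρ^k/2 := by
        rw [map_mul, Complex.abs_ofReal, abs_of_pos hεpos]
        have h1 : εr ≤ ρ^k/(4*(Complex.abs sc+1)) := min_le_right _ _
        have h2 : εr * Complex.abs sc ≤ (ρ^k/(4*(Complex.abs sc+1))) * (Complex.abs sc + 1) := by
          apply mul_le_mul h1 (by linarith) (Complex.abs.nonneg _) (by positivity)
        have h3 : (ρ^k/(4*(Complex.abs sc+1))) * (Complex.abs sc + 1) = ρ^k/4 := by
          field_simp
        have : (0:ℝ) < ρ^k := by positivity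
        rw [h3] at h2
        linarith
      have hres := hkey j k hj hjk hkn ((εr:ℂ)) ((εr:ℂ)*sc) hc1 hc2
      have hεne : ((εr:ℂ)) ≠ 0 := by
        simp only [ne_eq, Complex.ofReal_eq_zero]
        exact hεpos.ne'
      have hcomb : ((εr:ℂ)) • v j + ((εr:ℂ)*sc) • v k = (εr:ℂ) • (v j + sc • v k) := by
        rw [smul_add, smul_smul]
      rw [hcomb] at hres
      rcases hres with h | h
      · left; exact (ustable_smul_iff hεne).mp h
      · right
        rcases smul_eq_zero.mp h with h' | h'
        · exact absurd h' hεne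
        · exact h'
    -- expansion of T on degree ≤ n polynomials
    have hexp : ∀ f : Polynomial ℂ, f.degree ≤ (n : WithBot ℕ) →
        T f = ∑ m ∈ Finset.range (n+1),
          ((Polynomial.taylor (-w₀) f).coeff m) • v (n - m) := by
      intro f hdf
      have hnat : f.natDegree ≤ n := natDegree_le_iff_degree_le.mpr hdf
      have htay : (Polynomial.taylor (-w₀) f).natDegree < n+1 := by
        rw [Polynomial.natDegree_taylor]
        omega
      have hsum : f = ∑ m ∈ Finset.range (n+1),
          Polynomial.C ((Polynomial.taylor (-w₀) f).coeff m) * (X + C w₀)^m := by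
        conv_lhs => rw [← Polynomial.sum_taylor_eq f (-w₀)]
        rw [Polynomial.sum_over_range' _ (fun m => by simp) (n+1) htay]
        apply Finset.sum_congr rfl
        intro m _
        rw [map_neg, sub_neg_eq_add]
      conv_lhs => rw [hsum]
      rw [map_sum]
      apply Finset.sum_congr rfl
      intro m hm
      have hmn : m ≤ n := by
        have := Finset.mem_range.mp hm
        omega
      have h9 : n - (n - m) = m := by omega
      rw [← smul_eq_C_mul, map_smul]
      show _ • T ((X + C w₀) ^ m) = _ • T ((X + C w₀) ^ (n - (n - m)))
      rw [h9]
    by_cases hall : ∀ j : ℕ, j ≤ n → v j = 0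
    · refine ⟨0, 1, ?_, ?_⟩
      · intro z _
        simp
      · intro f hdf
        rw [hexp f hdf]
        rw [LinearMap.zero_apply, zero_smul]
        apply Finset.sum_eq_zero
        intro m hm
        rw [hall (n - m) (by omega), smul_zero]
    · push_neg at hall
      obtain ⟨k₀, hk₀n, hk₀ne⟩ := hall
      have hk₀1 : 1 ≤ k₀ := by
        rcases Nat.eq_zero_or_pos k₀ with h | h
        · exact absurd (h ▸ hv0) hk₀ne
        · exact h
      have hPstab : UStable (v k₀) := (hsingle k₀ hk₀1 hk₀n).resolve_right hk₀ne
      have hPI : (v k₀).eval Complex.I ≠ 0 := hPstab Complex.I (by simp)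
      -- all v j are multiples of v k₀
      have hcoef : ∀ j : ℕ, j ≤ n → ∃ cj : ℂ, v j = cj • v k₀ := by
        intro j hjn
        rcases Nat.eq_zero_or_pos j with hj0 | hj1
        · exact ⟨0, by rw [hj0, hv0, zero_smul]⟩
        by_cases hvj : v j = 0
        · exact ⟨0, by rw [hvj, zero_smul]⟩
        rcases lt_trichotomy j k₀ with hlt | heq | hgt
        · have hp := hpencil j k₀ hj1 hlt.le hk₀n
            (-(v j).eval Complex.I / (v k₀).eval Complex.I)
          rcases hp with h | h
          · exfalso
            apply h Complex.I (by simp)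
            simp only [eval_add, eval_smul, smul_eq_mul]
            field_simp
            ring
          · refine ⟨-(-(v j).eval Complex.I / (v k₀).eval Complex.I), ?_⟩
            rw [neg_smul, eq_comm, neg_eq_iff_add_eq_zero, add_comm]
            exact h
        · exact ⟨1, by rw [heq, one_smul]⟩
        · have hvjst : UStable (v j) := (hsingle j hj1 hjn).resolve_right hvj
          have hvjI : (v j).eval Complex.I ≠ 0 := hvjst Complex.I (by simp)
          have hp := hpencil k₀ j hk₀1 hgt.le hjn
            (-(v k₀).eval Complex.I / (v j).eval Complex.I)
          rcases hp with h | h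
          · exfalso
            apply h Complex.I (by simp)
            simp only [eval_add, eval_smul, smul_eq_mul]
            field_simp
            ring
          · set sc := -(v k₀).eval Complex.I / (v j).eval Complex.I with hsc
            have hscne : sc ≠ 0 := by
              rw [hsc]
              apply div_ne_zero _ hvjI
              simpa using hPI
            have hvk : v k₀ = (-sc) • v j := by
              rw [neg_smul, eq_comm, neg_eq_iff_add_eq_zero, add_comm]
              exact h
            refine ⟨(-sc)⁻¹, ?_⟩
            rw [hvk, smul_smul, inv_mul_cancel₀ (neg_ne_zero.mpr hscne), one_smul]
      -- build the functional
      classical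
      set cj : ℕ → ℂ := fun j => if h : j ≤ n then Classical.choose (hcoef j h) else 0 with hcj
      have hcjspec : ∀ j : ℕ, j ≤ n → v j = cj j • v k₀ := by
        intro j hjn
        rw [hcj]
        simp only [dif_pos hjn]
        exact Classical.choose_spec (hcoef j hjn)
      set α : Polynomial ℂ →ₗ[ℂ] ℂ :=
        ∑ m ∈ Finset.range (n+1),
          (cj (n - m)) • ((Polynomial.lcoeff ℂ m).comp (Polynomial.taylor (-w₀))) with hα
      refine ⟨α, v k₀, hPstab, ?_⟩
      intro f hdf
      have hαf : α f = ∑ m ∈ Finset.range (n+1),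
          (cj (n - m)) * ((Polynomial.taylor (-w₀) f).coeff m) := by
        rw [hα, LinearMap.sum_apply]
        apply Finset.sum_congr rfl
        intro m _
        rw [LinearMap.smul_apply, LinearMap.comp_apply, Polynomial.lcoeff_apply, smul_eq_mul]
      rw [hexp f hdf, hαf, Finset.sum_smul]
      apply Finset.sum_congr rfl
      intro m hm
      rw [hcjspec (n - m) (by omega), smul_smul, mul_comm]


/-- **Theorem (finite-degree stability preservers).**
`T : ℂ_n[z] → ℂ[z]` maps every stable polynomial of degree at most `n` to a stable
polynomial or to `0` iff either (a) `T(f) = α(f)P` on `ℂ_n[z]` with `α` a linear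
functional and `P` stable, or (b) `T[(z+w)^n]` is stable. -/
theorem stmt_0 (n : ℕ) (T : Polynomial ℂ →ₗ[ℂ] Polynomial ℂ) :
    (∀ f : Polynomial ℂ, f.degree ≤ (n : WithBot ℕ) → UStable f →
      (UStable (T f) ∨ T f = 0)) ↔
    ((∃ (α : Polynomial ℂ →ₗ[ℂ] ℂ) (P : Polynomial ℂ), UStable P ∧
        ∀ f : Polynomial ℂ, f.degree ≤ (n : WithBot ℕ) → T f = α f • P) ∨
      BStable (extT T ((Polynomial.C Polynomial.X + Polynomial.X) ^ n))) := by
  constructor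
  · intro H
    exact fwd n T H
  · intro H
    rcases H with ⟨α, P, hP, hTf⟩ | Hb
    · intro f hdf _
      rw [hTf f hdf]
      by_cases h : α f = 0
      · right; rw [h, zero_smul]
      · left; exact (ustable_smul_iff h).mpr hP
    · exact bwd_b n T Hb
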